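/- Let r ∈ 𝒟 = {r ∈ 𝒢 : I(r) = 1, P(r) = 0, H(r) = 0}. Then there exist real numbers λ, η with ∇U(r) = λ M ∇I(r) + η ∇H(r) if and only if there exist real numbers λ, σ with ∇U(r) = λ M ∇I(r) + σ ∇P(r), where all gradients are taken with respect to the six variables (r₁₂, r₁₃, r₁₄, r₂₃, r₂₄, r₃₄). That is, r is a critical point of U restricted to {I = 1, H = 0} if and only if it is a critical point of U restricted to {I = 1, P = 0}. -/

import Mathlib

open MvPolynomial ContinuousLinearMap
set_option maxHeartbeats 1600000




/-- The Cayley–Menger determinant as a function of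
`r = (r₁₂, r₁₃, r₁₄, r₂₃, r₂₄, r₃₄) ∈ ℝ⁶`. -/
noncomputable def Hvec (r : Fin 6 → ℝ) : ℝ :=
  Matrix.det !![(0:ℝ), 1, 1, 1, 1;
                1, 0, (r 0)^2, (r 1)^2, (r 2)^2;
                1, (r 0)^2, 0, (r 3)^2, (r 4)^2;
                1, (r 1)^2, (r 3)^2, 0, (r 5)^2;
                1, (r 2)^2, (r 4)^2, (r 5)^2, 0]

/-- The Ptolemy function `P` as a function of `r ∈ ℝ⁶`. -/
def Pvec (r : Fin 6 → ℝ) : ℝ :=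
  r 0 * r 5 + r 2 * r 3 - r 1 * r 4

/-- The Newtonian potential `U` as a function of `r ∈ ℝ⁶`. -/
noncomputable def Uvec (m1 m2 m3 m4 : ℝ) (r : Fin 6 → ℝ) : ℝ :=
  m1*m2/(r 0) + m1*m3/(r 1) + m1*m4/(r 2) +
  m2*m3/(r 3) + m2*m4/(r 4) + m3*m4/(r 5)

/-- The moment of inertia `I` as a function of `r ∈ ℝ⁶`. -/
noncomputable def Ivec (m1 m2 m3 m4 : ℝ) (r : Fin 6 → ℝ) : ℝ :=
  (1/(2*(m1 + m2 + m3 + m4))) *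
    (m1*m2*(r 0)^2 + m1*m3*(r 1)^2 + m1*m4*(r 2)^2 +
     m2*m3*(r 3)^2 + m2*m4*(r 4)^2 + m3*m4*(r 5)^2)

/-- Membership in `𝒢` for `r ∈ ℝ⁶`. -/
noncomputable def memG (r : Fin 6 → ℝ) : Prop :=
  (∀ i, 0 < r i) ∧ 0 ≤ Hvec r ∧
  r 0 + r 3 > r 1 ∧ r 0 + r 1 > r 3 ∧ r 1 + r 3 > r 0 ∧
  r 0 + r 4 > r 2 ∧ r 0 + r 2 > r 4 ∧ r 2 + r 4 > r 0 ∧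
  r 1 + r 5 > r 2 ∧ r 1 + r 2 > r 5 ∧ r 2 + r 5 > r 1 ∧
  r 3 + r 5 > r 4 ∧ r 3 + r 4 > r 5 ∧ r 4 + r 5 > r 3




theorem hasFDerivAt_eval_aux {n : ℕ} (x : Fin n → ℝ) (p : MvPolynomial (Fin n) ℝ) :
    HasFDerivAt (fun y : Fin n → ℝ => eval y p)
      (∑ i : Fin n, eval x (pderiv i p) • (proj i : (Fin n → ℝ) →L[ℝ] ℝ)) x := by
  induction p using MvPolynomial.induction_on with
  | C a =>
      have : (∑ i : Fin n, eval x (pderiv i (C a : MvPolynomial (Fin n) ℝ)) • (proj i : (Fin n → ℝ) →L[ℝ] ℝ)) = 0 := by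
        simp [pderiv_C]
      rw [this]
      simpa using (hasFDerivAt_const (a : ℝ) x)
  | add p q hp hq =>
      have h : HasFDerivAt (fun y : Fin n → ℝ => eval y p + eval y q) _ x := hp.add hq
      refine (h.congr_of_eventuallyEq (Filter.Eventually.of_forall fun y => ?_)).congr_fderiv (Eq.symm ?_)
      · simp
      · simp [map_add, add_smul, Finset.sum_add_distrib]
  | mul_X p j hp =>
      have hXj : HasFDerivAt (fun y : Fin n → ℝ => y j) (proj j : (Fin n → ℝ) →L[ℝ] ℝ) x :=
        (proj j : (Fin n → ℝ) →L[ℝ] ℝ).hasFDerivAt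
      have h := hp.mul hXj
      refine (h.congr_of_eventuallyEq (Filter.Eventually.of_forall fun y => ?_)).congr_fderiv (Eq.symm ?_)
      · simp
      · ext y
        simp only [ContinuousLinearMap.sum_apply, ContinuousLinearMap.smul_apply, proj_apply,
          ContinuousLinearMap.add_apply, smul_eq_mul]
        classical
        have hkey : ∀ i : Fin n, eval x (pderiv i (p * X j)) =
            eval x (pderiv i p) * x j + eval x p * (if j = i then 1 else 0) := by
          intro i
          rw [pderiv_mul]
          simp [pderiv_X, Pi.single_apply, apply_ite (eval x)]
        simp only [hkey]
        rw [Finset.sum_congr rfl (fun i _ => add_mul _ _ _), Finset.sum_add_distrib]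
        have h1 : ∑ i : Fin n, eval x p * (if j = i then (1:ℝ) else 0) * y i
            = eval x p * y j := by
          rw [Finset.sum_eq_single j] <;> simp +contextual [eq_comm]
        rw [h1, Finset.mul_sum, add_comm]
        congr 1
        exact Finset.sum_congr rfl fun i _ => by ring


noncomputable def pH : MvPolynomial (Fin 6) ℝ := C (-2) * X 0^4 * X 5^2 + C (-2) * X 0^2 * X 1^2 * X 3^2 + C (2) * X 0^2 * X 1^2 * X 4^2 + C (2) * X 0^2 * X 1^2 * X 5^2 + C (2) * X 0^2 * X 2^2 * X 3^2 + C (-2) * X 0^2 * X 2^2 * X 4^2 + C (2) * X 0^2 * X 2^2 * X 5^2 + C (2) * X 0^2 * X 3^2 * X 5^2 + C (2) * X 0^2 * X 4^2 * X 5^2 + C (-2) * X 0^2 * X 5^4 + C (-2) * X 1^4 * X 4^2 + C (2) * X 1^2 * X 2^2 * X 3^2 + C (2) * X 1^2 * X 2^2 * X 4^2 + C (-2) * X 1^2 * X 2^2 * X 5^2 + C (2) * X 1^2 * X 3^2 * X 4^2 + C (-2) * X 1^2 * X 4^4 + C (2) * X 1^2 * X 4^2 * X 5^2 + C (-2) *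 X 2^4 * X 3^2 + C (-2) * X 2^2 * X 3^4 + C (2) * X 2^2 * X 3^2 * X 4^2 + C (2) * X 2^2 * X 3^2 * X 5^2 + C (-2) * X 3^2 * X 4^2 * X 5^2

noncomputable def pP : MvPolynomial (Fin 6) ℝ := X 0 * X 5 + X 2 * X 3 - X 1 * X 4

lemma eval_pH (y : Fin 6 → ℝ) : eval y pH = -2*y 0^4*y 5^2 - 2*y 0^2*y 1^2*y 3^2 + 2*y 0^2*y 1^2*y 4^2 + 2*y 0^2*y 1^2*y 5^2 + 2*y 0^2*y 2^2*y 3^2 - 2*y 0^2*y 2^2*y 4^2 + 2*y 0^2*y 2^2*y 5^2 + 2*y 0^2*y 3^2*y 5^2 + 2*y 0^2*y 4^2*y 5^2 - 2*y 0^2*y 5^4 - 2*y 1^4*y 4^2 + 2*y 1^2*y 2^2*y 3^2 + 2*y 1^2*y 2^2*y 4^2 - 2*y 1^2*y 2^2*y 5^2 + 2*y 1^2*y 3^2*y 4^2 - 2*y 1^2*y 4^4 + 2*y 1^2*y 4^2*y 5^2 - 2*y 2^4*y 3^2 - 2*y 2^2*y 3^4 + 2*y 2^2*y 3^2*y 4^2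 + 2*y 2^2*y 3^2*y 5^2 - 2*y 3^2*y 4^2*y 5^2 := by
  simp [pH]; ring

lemma eval_pP (y : Fin 6 → ℝ) : eval y pP = y 0 * y 5 + y 2 * y 3 - y 1 * y 4 := by
  simp [pP]

lemma Hvec_eq (y : Fin 6 → ℝ) : Hvec y = eval y pH := by
  rw [eval_pH]
  show Matrix.det _ = _
  simp [Matrix.det_succ_row_zero, Fin.sum_univ_succ, Fin.succAbove]
  ring

lemma Pvec_eq (y : Fin 6 → ℝ) : Pvec y = eval y pP := by
  rw [eval_pP]; rfl


lemma pdH_0 (y : Fin 6 → ℝ) : eval y (pderiv 0 pH) = -8*y 0^3*y 5^2 - 4*y 0*y 1^2*y 3^2 + 4*y 0*y 1^2*y 4^2 + 4*y 0*y 1^2*y 5^2 + 4*y 0*y 2^2*y 3^2 - 4*y 0*y 2^2*y 4^2 + 4*y 0*y 2^2*y 5^2 + 4*y 0*y 3^2*y 5^2 + 4*y 0*y 4^2*y 5^2 - 4*y 0*y 5^4 := by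
  simp [pH, pderiv_mul, pderiv_pow, pderiv_C, pderiv_X, Pi.single_apply]; ring


lemma pdP_0 (y : Fin 6 → ℝ) : eval y (pderiv 0 pP) = y 5 := by
  simp [pP, pderiv_mul, pderiv_C, pderiv_X, Pi.single_apply]


lemma pdH_1 (y : Fin 6 → ℝ) : eval y (pderiv 1 pH) = -4*y 0^2*y 1*y 3^2 + 4*y 0^2*y 1*y 4^2 + 4*y 0^2*y 1*y 5^2 - 8*y 1^3*y 4^2 + 4*y 1*y 2^2*y 3^2 + 4*y 1*y 2^2*y 4^2 - 4*y 1*y 2^2*y 5^2 + 4*y 1*y 3^2*y 4^2 - 4*y 1*y 4^4 + 4*y 1*y 4^2*y 5^2 := by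
  simp [pH, pderiv_mul, pderiv_pow, pderiv_C, pderiv_X, Pi.single_apply]; ring


lemma pdP_1 (y : Fin 6 → ℝ) : eval y (pderiv 1 pP) = -y 4 := by
  simp [pP, pderiv_mul, pderiv_C, pderiv_X, Pi.single_apply]


lemma pdH_2 (y : Fin 6 → ℝ) : eval y (pderiv 2 pH) = 4*y 0^2*y 2*y 3^2 - 4*y 0^2*y 2*y 4^2 + 4*y 0^2*y 2*y 5^2 + 4*y 1^2*y 2*y 3^2 + 4*y 1^2*y 2*y 4^2 - 4*y 1^2*y 2*y 5^2 - 8*y 2^3*y 3^2 - 4*y 2*y 3^4 + 4*y 2*y 3^2*y 4^2 + 4*y 2*y 3^2*y 5^2 := by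
  simp [pH, pderiv_mul, pderiv_pow, pderiv_C, pderiv_X, Pi.single_apply]; ring


lemma pdP_2 (y : Fin 6 → ℝ) : eval y (pderiv 2 pP) = y 3 := by
  simp [pP, pderiv_mul, pderiv_C, pderiv_X, Pi.single_apply]


lemma pdH_3 (y : Fin 6 → ℝ) : eval y (pderiv 3 pH) = -4*y 0^2*y 1^2*y 3 + 4*y 0^2*y 2^2*y 3 + 4*y 0^2*y 3*y 5^2 + 4*y 1^2*y 2^2*y 3 + 4*y 1^2*y 3*y 4^2 - 4*y 2^4*y 3 - 8*y 2^2*y 3^3 + 4*y 2^2*y 3*y 4^2 + 4*y 2^2*y 3*y 5^2 - 4*y 3*y 4^2*y 5^2 := by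
  simp [pH, pderiv_mul, pderiv_pow, pderiv_C, pderiv_X, Pi.single_apply]; ring


lemma pdP_3 (y : Fin 6 → ℝ) : eval y (pderiv 3 pP) = y 2 := by
  simp [pP, pderiv_mul, pderiv_C, pderiv_X, Pi.single_apply]


lemma pdH_4 (y : Fin 6 → ℝ) : eval y (pderiv 4 pH) = 4*y 0^2*y 1^2*y 4 - 4*y 0^2*y 2^2*y 4 + 4*y 0^2*y 4*y 5^2 - 4*y 1^4*y 4 + 4*y 1^2*y 2^2*y 4 + 4*y 1^2*y 3^2*y 4 - 8*y 1^2*y 4^3 + 4*y 1^2*y 4*y 5^2 + 4*y 2^2*y 3^2*y 4 - 4*y 3^2*y 4*y 5^2 := by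
  simp [pH, pderiv_mul, pderiv_pow, pderiv_C, pderiv_X, Pi.single_apply]; ring


lemma pdP_4 (y : Fin 6 → ℝ) : eval y (pderiv 4 pP) = -y 1 := by
  simp [pP, pderiv_mul, pderiv_C, pderiv_X, Pi.single_apply]


lemma pdH_5 (y : Fin 6 → ℝ) : eval y (pderiv 5 pH) = -4*y 0^4*y 5 + 4*y 0^2*y 1^2*y 5 + 4*y 0^2*y 2^2*y 5 + 4*y 0^2*y 3^2*y 5 + 4*y 0^2*y 4^2*y 5 - 8*y 0^2*y 5^3 - 4*y 1^2*y 2^2*y 5 + 4*y 1^2*y 4^2*y 5 + 4*y 2^2*y 3^2*y 5 - 4*y 3^2*y 4^2*y 5 := by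
  simp [pH, pderiv_mul, pderiv_pow, pderiv_C, pderiv_X, Pi.single_apply]; ring


lemma pdP_5 (y : Fin 6 → ℝ) : eval y (pderiv 5 pP) = y 0 := by
  simp [pP, pderiv_mul, pderiv_C, pderiv_X, Pi.single_apply]

/-- For `r ∈ 𝒟 = {r ∈ 𝒢 : I(r) = 1, P(r) = 0, H(r) = 0}`, `r` is a critical
point of `U` restricted to `{I = 1, H = 0}` if and only if it is a critical
point of `U` restricted to `{I = 1, P = 0}` (via Lagrange multipliers). -/
theorem critical_N_iff_critical_Mplus (m1 m2 m3 m4 : ℝ)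
    (hm1 : 0 < m1) (hm2 : 0 < m2) (hm3 : 0 < m3) (hm4 : 0 < m4)
    (r : Fin 6 → ℝ) (hG : memG r)
    (hI : Ivec m1 m2 m3 m4 r = 1) (hP : Pvec r = 0) (hH : Hvec r = 0) :
    (∃ lam eta : ℝ,
        fderiv ℝ (Uvec m1 m2 m3 m4) r =
          (lam * (m1 + m2 + m3 + m4)) • fderiv ℝ (Ivec m1 m2 m3 m4) r
            + eta • fderiv ℝ Hvec r) ↔
    (∃ lam sig : ℝ,
        fderiv ℝ (Uvec m1 m2 m3 m4) r =
          (lam * (m1 + m2 + m3 + m4)) • fderiv ℝ (Ivec m1 m2 m3 m4) r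
            + sig • fderiv ℝ Pvec r) := by
  
  obtain ⟨hpos, hHnn, t01,t02,t03,t04,t05,t06,t07,t08,t09,t10,t11,t12⟩ := hG
  have h0 := hpos 0
  have h1 := hpos 1
  have h2 := hpos 2
  have h3 := hpos 3
  have h4 := hpos 4
  have h5 := hpos 5
  have hPv : r 0 * r 5 + r 2 * r 3 - r 1 * r 4 = 0 := hP
  have hHv : -2*r 0^4*r 5^2 - 2*r 0^2*r 1^2*r 3^2 + 2*r 0^2*r 1^2*r 4^2 + 2*r 0^2*r 1^2*r 5^2 + 2*r 0^2*r 2^2*r 3^2 - 2*r 0^2*r 2^2*r 4^2 + 2*r 0^2*r 2^2*r 5^2 + 2*r 0^2*r 3^2*r 5^2 + 2*r 0^2*r 4^2*r 5^2 - 2*r 0^2*r 5^4 - 2*r 1^4*r 4^2 + 2*r 1^2*r 2^2*r 3^2 + 2*r 1^2*r 2^2*r 4^2 - 2*r 1^2*r 2^2*r 5^2 + 2*r 1^2*r 3^2*r 4^2 - 2*r 1^2*r 4^4 + 2*r 1^2*r 4^2*r 5^2 - 2*r 2^4*r 3^2 - 2*r 2^2*r 3^4 + 2*r 2^2*r 3^2*r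 4^2 + 2*r 2^2*r 3^2*r 5^2 - 2*r 3^2*r 4^2*r 5^2 = 0 := by
    rw [← eval_pH r, ← Hvec_eq r]; exact hH
  have hg : -r 0^2*r 2*r 5 + r 0*r 1^2*r 3 - r 0*r 2^2*r 3 - r 0*r 3*r 5^2 + r 1^2*r 2*r 5 - r 2*r 3^2*r 5 = 0 := by
    have hsq : (-r 0^2*r 2*r 5 + r 0*r 1^2*r 3 - r 0*r 2^2*r 3 - r 0*r 3*r 5^2 + r 1^2*r 2*r 5 - r 2*r 3^2*r 5)^2 * (2 * r 1^2) = 0 := by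
      linear_combination (-2*r 0^3*r 1^4*r 5 + 2*r 0^3*r 1^2*r 2^2*r 5 - 2*r 0^2*r 1^5*r 4 - 2*r 0^2*r 1^4*r 2*r 3 + 2*r 0^2*r 1^3*r 2^2*r 4 + 2*r 0^2*r 1^2*r 2^3*r 3 + 4*r 0^2*r 1^2*r 2*r 3*r 5^2 + 2*r 0*r 1^6*r 5 - 2*r 0*r 1^4*r 2^2*r 5 - 2*r 0*r 1^4*r 3^2*r 5 + 2*r 0*r 1^4*r 4^2*r 5 - 2*r 0*r 1^4*r 5^3 + 4*r 0*r 1^3*r 2*r 3*r 4*r 5 + 4*r 0*r 1^2*r 2^2*r 3^2*r 5 + 2*r 0*r 1^2*r 3^2*r 5^3 + 2*r 1^7*r 4 + 2*r 1^6*r 2*r 3 - 2*r 1^5*r 2^2*r 4 - 2*r 1^5*r 3^2*r 4 + 2*r 1^5*r 4^3 - 2*r 1^5*r 4*r 5^2 - 2*r 1^4*r 2^3*r 3 - 2*r 1^4*r 2*r 3^3 + 2*r 1^4*r 2*r 3*r 4^2 - 2*r 1^4*r 2*r 3*r 5^2 + 2*r 1^3*r 3^2*r 4*r 5^2 + 2*r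 1^2*r 2*r 3^3*r 5^2) * hPv - r 1^4 * hHv
    have h2' : (-r 0^2*r 2*r 5 + r 0*r 1^2*r 3 - r 0*r 2^2*r 3 - r 0*r 3*r 5^2 + r 1^2*r 2*r 5 - r 2*r 3^2*r 5)^2 = 0 := by
      have hb : (2:ℝ) * r 1^2 ≠ 0 := by positivity
      exact (mul_eq_zero.mp hsq).resolve_right hb
    exact (pow_eq_zero_iff two_ne_zero).mp h2'
  have hprop0 : r 0 * (-8*r 0^3*r 5^2 - 4*r 0*r 1^2*r 3^2 + 4*r 0*r 1^2*r 4^2 + 4*r 0*r 1^2*r 5^2 + 4*r 0*r 2^2*r 3^2 - 4*r 0*r 2^2*r 4^2 + 4*r 0*r 2^2*r 5^2 + 4*r 0*r 3^2*r 5^2 + 4*r 0*r 4^2*r 5^2 - 4*r 0*r 5^4) = (r 5) * (-4*r 0^4*r 5 + 4*r 0^2*r 1^2*r 5 + 4*r 0^2*r 2^2*r 5 + 4*r 0^2*r 3^2*r 5 + 4*r 0^2*r 4^2*r 5 - 8*r 0^2*r 5^3 - 4*r 1^2*r 2^2*r 5 + 4*r 1^2*r 4^2*r 5 + 4*r 2^2*r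 3^2*r 5 - 4*r 3^2*r 4^2*r 5) := by
    have hz : (r 0 * (-8*r 0^3*r 5^2 - 4*r 0*r 1^2*r 3^2 + 4*r 0*r 1^2*r 4^2 + 4*r 0*r 1^2*r 5^2 + 4*r 0*r 2^2*r 3^2 - 4*r 0*r 2^2*r 4^2 + 4*r 0*r 2^2*r 5^2 + 4*r 0*r 3^2*r 5^2 + 4*r 0*r 4^2*r 5^2 - 4*r 0*r 5^4) - (r 5) * (-4*r 0^4*r 5 + 4*r 0^2*r 1^2*r 5 + 4*r 0^2*r 2^2*r 5 + 4*r 0^2*r 3^2*r 5 + 4*r 0^2*r 4^2*r 5 - 8*r 0^2*r 5^3 - 4*r 1^2*r 2^2*r 5 + 4*r 1^2*r 4^2*r 5 + 4*r 2^2*r 3^2*r 5 - 4*r 3^2*r 4^2*r 5)) * r 1^2 = 0 := by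
      linear_combination (-4*r 0^3*r 1^2*r 5 + 4*r 0^3*r 2^2*r 5 - 4*r 0^2*r 1^3*r 4 - 4*r 0^2*r 1^2*r 2*r 3 + 4*r 0^2*r 1*r 2^2*r 4 + 4*r 0^2*r 2^3*r 3 + 4*r 0*r 1^2*r 5^3 - 4*r 0*r 3^2*r 5^3 + 4*r 1^3*r 4*r 5^2 + 4*r 1^2*r 2*r 3*r 5^2 - 4*r 1*r 3^2*r 4*r 5^2 - 4*r 2*r 3^3*r 5^2) * hPv + (4*r 0^2*r 2*r 5 - 4*r 0*r 1^2*r 3 + 4*r 0*r 2^2*r 3 - 4*r 0*r 3*r 5^2 + 4*r 1^2*r 2*r 5 - 4*r 2*r 3^2*r 5) * hg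
    have hb : r 1^2 ≠ 0 := by positivity
    have := (mul_eq_zero.mp hz).resolve_right hb
    linarith [this]
  have hprop1 : r 0 * (-4*r 0^2*r 1*r 3^2 + 4*r 0^2*r 1*r 4^2 + 4*r 0^2*r 1*r 5^2 - 8*r 1^3*r 4^2 + 4*r 1*r 2^2*r 3^2 + 4*r 1*r 2^2*r 4^2 - 4*r 1*r 2^2*r 5^2 + 4*r 1*r 3^2*r 4^2 - 4*r 1*r 4^4 + 4*r 1*r 4^2*r 5^2) = (-(r 4)) * (-4*r 0^4*r 5 + 4*r 0^2*r 1^2*r 5 + 4*r 0^2*r 2^2*r 5 + 4*r 0^2*r 3^2*r 5 + 4*r 0^2*r 4^2*r 5 - 8*r 0^2*r 5^3 - 4*r 1^2*r 2^2*r 5 + 4*r 1^2*r 4^2*r 5 + 4*r 2^2*r 3^2*r 5 - 4*r 3^2*r 4^2*r 5) := by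
    have hz : (r 0 * (-4*r 0^2*r 1*r 3^2 + 4*r 0^2*r 1*r 4^2 + 4*r 0^2*r 1*r 5^2 - 8*r 1^3*r 4^2 + 4*r 1*r 2^2*r 3^2 + 4*r 1*r 2^2*r 4^2 - 4*r 1*r 2^2*r 5^2 + 4*r 1*r 3^2*r 4^2 - 4*r 1*r 4^4 + 4*r 1*r 4^2*r 5^2) - (-(r 4)) * (-4*r 0^4*r 5 + 4*r 0^2*r 1^2*r 5 + 4*r 0^2*r 2^2*r 5 + 4*r 0^2*r 3^2*r 5 + 4*r 0^2*r 4^2*r 5 - 8*r 0^2*r 5^3 - 4*r 1^2*r 2^2*r 5 + 4*r 1^2*r 4^2*r 5 + 4*r 2^2*r 3^2*r 5 - 4*r 3^2*r 4^2*r 5)) * r 1^4 = 0 := by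
      linear_combination (-4*r 0^3*r 1^4*r 4 - 4*r 0^3*r 1^3*r 2*r 3 + 4*r 0^3*r 1*r 2*r 3*r 5^2 + 4*r 0^2*r 1^5*r 5 - 8*r 0^2*r 1^3*r 2^2*r 5 - 8*r 0^2*r 1^3*r 3^2*r 5 + 4*r 0^2*r 1^2*r 2*r 3*r 4*r 5 + 8*r 0^2*r 1*r 2^2*r 3^2*r 5 + 4*r 0^2*r 1*r 3^2*r 5^3 + 8*r 0*r 1^6*r 4 + 8*r 0*r 1^5*r 2*r 3 - 4*r 0*r 1^4*r 2^2*r 4 - 4*r 0*r 1^4*r 3^2*r 4 + 4*r 0*r 1^4*r 4^3 - 8*r 0*r 1^4*r 4*r 5^2 - 4*r 0*r 1^3*r 2^3*r 3 - 4*r 0*r 1^3*r 2*r 3^3 + 4*r 0*r 1^3*r 2*r 3*r 4^2 - 12*r 0*r 1^3*r 2*r 3*r 5^2 + 4*r 0*r 1^2*r 2^2*r 3^2*r 4 + 4*r 0*r 1^2*r 3^2*r 4*r 5^2 + 4*r 0*r 1*r 2^3*r 3^3 + 8*r 0*r 1*r 2*r 3^3*r 5^2 + 4*r 1^5*r 2^2*r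 5 - 4*r 1^5*r 4^2*r 5 - 4*r 1^4*r 2*r 3*r 4*r 5 - 8*r 1^3*r 2^2*r 3^2*r 5 + 4*r 1^3*r 3^2*r 4^2*r 5 + 4*r 1^2*r 2*r 3^3*r 4*r 5 + 4*r 1*r 2^2*r 3^4*r 5) * hPv + (-4*r 0^2*r 1^3*r 3 + 4*r 0^2*r 1*r 3*r 5^2 - 8*r 0*r 1^3*r 2*r 5 + 8*r 0*r 1*r 2*r 3^2*r 5 - 4*r 1^3*r 2^2*r 3 + 4*r 1*r 2^2*r 3^3) * hg
    have hb : r 1^4 ≠ 0 := by positivity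
    have := (mul_eq_zero.mp hz).resolve_right hb
    linarith [this]
  have hprop2 : r 0 * (4*r 0^2*r 2*r 3^2 - 4*r 0^2*r 2*r 4^2 + 4*r 0^2*r 2*r 5^2 + 4*r 1^2*r 2*r 3^2 + 4*r 1^2*r 2*r 4^2 - 4*r 1^2*r 2*r 5^2 - 8*r 2^3*r 3^2 - 4*r 2*r 3^4 + 4*r 2*r 3^2*r 4^2 + 4*r 2*r 3^2*r 5^2) = (r 3) * (-4*r 0^4*r 5 + 4*r 0^2*r 1^2*r 5 + 4*r 0^2*r 2^2*r 5 + 4*r 0^2*r 3^2*r 5 + 4*r 0^2*r 4^2*r 5 - 8*r 0^2*r 5^3 - 4*r 1^2*r 2^2*r 5 + 4*r 1^2*r 4^2*r 5 + 4*r 2^2*r 3^2*r 5 - 4*r 3^2*r 4^2*r 5) := by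
    have hz : (r 0 * (4*r 0^2*r 2*r 3^2 - 4*r 0^2*r 2*r 4^2 + 4*r 0^2*r 2*r 5^2 + 4*r 1^2*r 2*r 3^2 + 4*r 1^2*r 2*r 4^2 - 4*r 1^2*r 2*r 5^2 - 8*r 2^3*r 3^2 - 4*r 2*r 3^4 + 4*r 2*r 3^2*r 4^2 + 4*r 2*r 3^2*r 5^2) - (r 3) * (-4*r 0^4*r 5 + 4*r 0^2*r 1^2*r 5 + 4*r 0^2*r 2^2*r 5 + 4*r 0^2*r 3^2*r 5 + 4*r 0^2*r 4^2*r 5 - 8*r 0^2*r 5^3 - 4*r 1^2*r 2^2*r 5 + 4*r 1^2*r 4^2*r 5 + 4*r 2^2*r 3^2*r 5 - 4*r 3^2*r 4^2*r 5)) * r 1^2 = 0 := by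
      linear_combination (4*r 0^4*r 2*r 5 + 4*r 0^3*r 1*r 2*r 4 + 4*r 0^3*r 2^2*r 3 + 4*r 0^3*r 3*r 5^2 - 4*r 0^2*r 1^2*r 2*r 5 + 4*r 0^2*r 1*r 3*r 4*r 5 - 4*r 0*r 1^3*r 2*r 4 - 4*r 0*r 1^2*r 2^2*r 3 + 4*r 0*r 1^2*r 3*r 5^2 - 4*r 0*r 1*r 2*r 3^2*r 4 - 4*r 0*r 2^2*r 3^3 - 4*r 0*r 3^3*r 5^2 + 4*r 1^3*r 3*r 4*r 5 + 4*r 1^2*r 2*r 3^2*r 5 - 4*r 1*r 3^3*r 4*r 5 - 4*r 2*r 3^4*r 5) * hPv + (4*r 0^3*r 5 + 4*r 0^2*r 2*r 3 - 4*r 0*r 1^2*r 5 - 4*r 0*r 3^2*r 5 + 4*r 1^2*r 2*r 3 - 4*r 2*r 3^3) * hg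
    have hb : r 1^2 ≠ 0 := by positivity
    have := (mul_eq_zero.mp hz).resolve_right hb
    linarith [this]
  have hprop3 : r 0 * (-4*r 0^2*r 1^2*r 3 + 4*r 0^2*r 2^2*r 3 + 4*r 0^2*r 3*r 5^2 + 4*r 1^2*r 2^2*r 3 + 4*r 1^2*r 3*r 4^2 - 4*r 2^4*r 3 - 8*r 2^2*r 3^3 + 4*r 2^2*r 3*r 4^2 + 4*r 2^2*r 3*r 5^2 - 4*r 3*r 4^2*r 5^2) = (r 2) * (-4*r 0^4*r 5 + 4*r 0^2*r 1^2*r 5 + 4*r 0^2*r 2^2*r 5 + 4*r 0^2*r 3^2*r 5 + 4*r 0^2*r 4^2*r 5 - 8*r 0^2*r 5^3 - 4*r 1^2*r 2^2*r 5 + 4*r 1^2*r 4^2*r 5 + 4*r 2^2*r 3^2*r 5 - 4*r 3^2*r 4^2*r 5) := by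
    have hz : (r 0 * (-4*r 0^2*r 1^2*r 3 + 4*r 0^2*r 2^2*r 3 + 4*r 0^2*r 3*r 5^2 + 4*r 1^2*r 2^2*r 3 + 4*r 1^2*r 3*r 4^2 - 4*r 2^4*r 3 - 8*r 2^2*r 3^3 + 4*r 2^2*r 3*r 4^2 + 4*r 2^2*r 3*r 5^2 - 4*r 3*r 4^2*r 5^2) - (r 2) * (-4*r 0^4*r 5 + 4*r 0^2*r 1^2*r 5 + 4*r 0^2*r 2^2*r 5 + 4*r 0^2*r 3^2*r 5 + 4*r 0^2*r 4^2*r 5 - 8*r 0^2*r 5^3 - 4*r 1^2*r 2^2*r 5 + 4*r 1^2*r 4^2*r 5 + 4*r 2^2*r 3^2*r 5 - 4*r 3^2*r 4^2*r 5)) * r 1^2 = 0 := by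
      linear_combination (4*r 0^3*r 2*r 5^2 - 4*r 0^2*r 1^2*r 3*r 5 + 4*r 0^2*r 1*r 2*r 4*r 5 + 4*r 0^2*r 3*r 5^3 - 4*r 0*r 1^3*r 3*r 4 - 4*r 0*r 1^2*r 2*r 3^2 + 4*r 0*r 1^2*r 2*r 5^2 - 4*r 0*r 1*r 2^2*r 3*r 4 + 4*r 0*r 1*r 3*r 4*r 5^2 - 4*r 0*r 2^3*r 3^2 + 4*r 1^3*r 2*r 4*r 5 + 4*r 1^2*r 2^2*r 3*r 5 - 4*r 1*r 2*r 3^2*r 4*r 5 - 4*r 2^2*r 3^3*r 5) * hPv + (-4*r 0^2*r 1^2 + 4*r 0^2*r 5^2 + 4*r 1^2*r 2^2 - 4*r 2^2*r 3^2) * hg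
    have hb : r 1^2 ≠ 0 := by positivity
    have := (mul_eq_zero.mp hz).resolve_right hb
    linarith [this]
  have hprop4 : r 0 * (4*r 0^2*r 1^2*r 4 - 4*r 0^2*r 2^2*r 4 + 4*r 0^2*r 4*r 5^2 - 4*r 1^4*r 4 + 4*r 1^2*r 2^2*r 4 + 4*r 1^2*r 3^2*r 4 - 8*r 1^2*r 4^3 + 4*r 1^2*r 4*r 5^2 + 4*r 2^2*r 3^2*r 4 - 4*r 3^2*r 4*r 5^2) = (-(r 1)) * (-4*r 0^4*r 5 + 4*r 0^2*r 1^2*r 5 + 4*r 0^2*r 2^2*r 5 + 4*r 0^2*r 3^2*r 5 + 4*r 0^2*r 4^2*r 5 - 8*r 0^2*r 5^3 - 4*r 1^2*r 2^2*r 5 + 4*r 1^2*r 4^2*r 5 + 4*r 2^2*r 3^2*r 5 - 4*r 3^2*r 4^2*r 5) := by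
    have hz : (r 0 * (4*r 0^2*r 1^2*r 4 - 4*r 0^2*r 2^2*r 4 + 4*r 0^2*r 4*r 5^2 - 4*r 1^4*r 4 + 4*r 1^2*r 2^2*r 4 + 4*r 1^2*r 3^2*r 4 - 8*r 1^2*r 4^3 + 4*r 1^2*r 4*r 5^2 + 4*r 2^2*r 3^2*r 4 - 4*r 3^2*r 4*r 5^2) - (-(r 1)) * (-4*r 0^4*r 5 + 4*r 0^2*r 1^2*r 5 + 4*r 0^2*r 2^2*r 5 + 4*r 0^2*r 3^2*r 5 + 4*r 0^2*r 4^2*r 5 - 8*r 0^2*r 5^3 - 4*r 1^2*r 2^2*r 5 + 4*r 1^2*r 4^2*r 5 + 4*r 2^2*r 3^2*r 5 - 4*r 3^2*r 4^2*r 5)) * r 1^3 = 0 := by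
      linear_combination (-4*r 0^3*r 1^4 + 4*r 0^3*r 1^2*r 2^2 + 4*r 0^2*r 1^3*r 4*r 5 + 12*r 0^2*r 1^2*r 2*r 3*r 5 + 4*r 0*r 1^6 - 4*r 0*r 1^4*r 2^2 - 4*r 0*r 1^4*r 3^2 + 8*r 0*r 1^4*r 4^2 - 8*r 0*r 1^4*r 5^2 + 8*r 0*r 1^3*r 2*r 3*r 4 + 4*r 0*r 1^2*r 2^2*r 3^2 + 8*r 0*r 1^2*r 3^2*r 5^2 - 4*r 1^5*r 4*r 5 - 4*r 1^4*r 2*r 3*r 5 + 4*r 1^3*r 3^2*r 4*r 5 + 4*r 1^2*r 2*r 3^3*r 5) * hPv + (4*r 0^2*r 1^2*r 2 + 8*r 0*r 1^2*r 3*r 5 - 4*r 1^4*r 2 + 4*r 1^2*r 2*r 3^2) * hg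
    have hb : r 1^3 ≠ 0 := by positivity
    have := (mul_eq_zero.mp hz).resolve_right hb
    linarith [this]
  have hHe1 : (0:ℝ) < -r 0^4 + 2*r 0^2*r 1^2 + 2*r 0^2*r 3^2 - r 1^4 + 2*r 1^2*r 3^2 - r 3^4 := by
    have hfac : -r 0^4 + 2*r 0^2*r 1^2 + 2*r 0^2*r 3^2 - r 1^4 + 2*r 1^2*r 3^2 - r 3^4 = (r 0 + r 1 + r 3) * (r 1 + r 3 - r 0) * (r 0 + r 3 - r 1) * (r 0 + r 1 - r 3) := by ring
    rw [hfac]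
    have f1 : (0:ℝ) < r 0 + r 1 + r 3 := by linarith
    have f2 : (0:ℝ) < r 1 + r 3 - r 0 := by linarith
    have f3 : (0:ℝ) < r 0 + r 3 - r 1 := by linarith
    have f4 : (0:ℝ) < r 0 + r 1 - r 3 := by linarith
    positivity
  have hprod : r 1^3 * r 3 * (-4*r 0^4*r 5 + 4*r 0^2*r 1^2*r 5 + 4*r 0^2*r 2^2*r 5 + 4*r 0^2*r 3^2*r 5 + 4*r 0^2*r 4^2*r 5 - 8*r 0^2*r 5^3 - 4*r 1^2*r 2^2*r 5 + 4*r 1^2*r 4^2*r 5 + 4*r 2^2*r 3^2*r 5 - 4*r 3^2*r 4^2*r 5) = 4 * r 1^2 * r 2 * r 4 * r 5 * (-r 0^4 + 2*r 0^2*r 1^2 + 2*r 0^2*r 3^2 - r 1^4 + 2*r 1^2*r 3^2 - r 3^4) := by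
    linear_combination (-4*r 0^4*r 1*r 2*r 5 - 4*r 0^3*r 1*r 3*r 5^2 + 8*r 0^2*r 1^3*r 2*r 5 - 4*r 0^2*r 1^2*r 3*r 4*r 5 + 4*r 0^2*r 1*r 2*r 3^2*r 5 - 4*r 0*r 1^3*r 3*r 5^2 + 4*r 0*r 1*r 3^3*r 5^2 - 4*r 1^5*r 2*r 5 - 4*r 1^4*r 3*r 4*r 5 + 4*r 1^3*r 2*r 3^2*r 5 + 4*r 1^2*r 3^3*r 4*r 5) * hPv + (-4*r 0^3*r 1*r 5 + 4*r 0*r 1^3*r 5 + 4*r 0*r 1*r 3^2*r 5) * hg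
  have hG5pos : (0:ℝ) < -4*r 0^4*r 5 + 4*r 0^2*r 1^2*r 5 + 4*r 0^2*r 2^2*r 5 + 4*r 0^2*r 3^2*r 5 + 4*r 0^2*r 4^2*r 5 - 8*r 0^2*r 5^3 - 4*r 1^2*r 2^2*r 5 + 4*r 1^2*r 4^2*r 5 + 4*r 2^2*r 3^2*r 5 - 4*r 3^2*r 4^2*r 5 := by
    have hlt : (0:ℝ) < r 1^3 * r 3 := by positivity
    have hR : (0:ℝ) < 4 * r 1^2 * r 2 * r 4 * r 5 * (-r 0^4 + 2*r 0^2*r 1^2 + 2*r 0^2*r 3^2 - r 1^4 + 2*r 1^2*r 3^2 - r 3^4) := by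
      have h' : (0:ℝ) < 4 * r 1^2 * r 2 * r 4 * r 5 := by positivity
      exact mul_pos h' hHe1
    rcases lt_or_ge 0 (-4*r 0^4*r 5 + 4*r 0^2*r 1^2*r 5 + 4*r 0^2*r 2^2*r 5 + 4*r 0^2*r 3^2*r 5 + 4*r 0^2*r 4^2*r 5 - 8*r 0^2*r 5^3 - 4*r 1^2*r 2^2*r 5 + 4*r 1^2*r 4^2*r 5 + 4*r 2^2*r 3^2*r 5 - 4*r 3^2*r 4^2*r 5) with hgt|hle
    · exact hgt
    · exfalso; nlinarith [hprod, hR, hlt, hle]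
  set cc : ℝ := (-4*r 0^4*r 5 + 4*r 0^2*r 1^2*r 5 + 4*r 0^2*r 2^2*r 5 + 4*r 0^2*r 3^2*r 5 + 4*r 0^2*r 4^2*r 5 - 8*r 0^2*r 5^3 - 4*r 1^2*r 2^2*r 5 + 4*r 1^2*r 4^2*r 5 + 4*r 2^2*r 3^2*r 5 - 4*r 3^2*r 4^2*r 5) / r 0 with hcc
  have hccne : cc ≠ 0 := div_ne_zero (ne_of_gt hG5pos) (ne_of_gt h0)
  have hfH : fderiv ℝ Hvec r = ∑ i : Fin 6, eval r (pderiv i pH) • (proj i : (Fin 6 → ℝ) →L[ℝ] ℝ) := by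
    have hfun : Hvec = fun y => eval y pH := funext fun y => Hvec_eq y
    rw [hfun]; exact (hasFDerivAt_eval_aux r pH).fderiv
  have hfP : fderiv ℝ Pvec r = ∑ i : Fin 6, eval r (pderiv i pP) • (proj i : (Fin 6 → ℝ) →L[ℝ] ℝ) := by
    have hfun : Pvec = fun y => eval y pP := funext fun y => Pvec_eq y
    rw [hfun]; exact (hasFDerivAt_eval_aux r pP).fderiv
  have hr0 : r 0 ≠ 0 := ne_of_gt h0
  have hc0 : eval r (pderiv (0:Fin 6) pH) = cc * eval r (pderiv (0:Fin 6) pP) := by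
    rw [pdH_0, pdP_0, hcc]; rw [div_mul_eq_mul_div, eq_div_iff hr0]; linear_combination hprop0
  have hc1 : eval r (pderiv (1:Fin 6) pH) = cc * eval r (pderiv (1:Fin 6) pP) := by
    rw [pdH_1, pdP_1, hcc]; rw [div_mul_eq_mul_div, eq_div_iff hr0]; linear_combination hprop1
  have hc2 : eval r (pderiv (2:Fin 6) pH) = cc * eval r (pderiv (2:Fin 6) pP) := by
    rw [pdH_2, pdP_2, hcc]; rw [div_mul_eq_mul_div, eq_div_iff hr0]; linear_combination hprop2
  have hc3 : eval r (pderiv (3:Fin 6) pH) = cc * eval r (pderiv (3:Fin 6) pP) := by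
    rw [pdH_3, pdP_3, hcc]; rw [div_mul_eq_mul_div, eq_div_iff hr0]; linear_combination hprop3
  have hc4 : eval r (pderiv (4:Fin 6) pH) = cc * eval r (pderiv (4:Fin 6) pP) := by
    rw [pdH_4, pdP_4, hcc]; rw [div_mul_eq_mul_div, eq_div_iff hr0]; linear_combination hprop4
  have hc5 : eval r (pderiv (5:Fin 6) pH) = cc * eval r (pderiv (5:Fin 6) pP) := by
    rw [pdH_5, pdP_5, hcc]; field_simp
  have hcomp : ∀ i : Fin 6, eval r (pderiv i pH) = cc * eval r (pderiv i pP) := by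
    intro i
    fin_cases i
    exacts [hc0, hc1, hc2, hc3, hc4, hc5]
  have hDH : fderiv ℝ Hvec r = cc • fderiv ℝ Pvec r := by
    rw [hfH, hfP, Finset.smul_sum]
    exact Finset.sum_congr rfl fun i _ => by rw [hcomp i, smul_smul]
  constructor
  · rintro ⟨lam, eta, hs⟩
    exact ⟨lam, eta * cc, by rw [hs, hDH, smul_smul]⟩
  · rintro ⟨lam, sig, hs⟩
    refine ⟨lam, sig / cc, ?_⟩
    rw [hs, hDH, smul_smul, div_mul_cancel₀ _ hccne]
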